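/- For a probability density p on (0,∞), T[p] is a nonnegative function with ∫₀^∞ T[p](x) dx = 1, i.e., T maps probability densities to probability densities. -/

import Mathlib

open MeasureTheory Real Set

noncomputable def T (p : ℝ → ℝ) (x : ℝ) : ℝ :=
  (1/2) * (∫ u in (0:ℝ)..x, p (x - u) * ∫ v in Ioi u, p v / v)
    + (1/2) * ∫ u in Ioi x, p u / u

section Core

variable (q : ℝ → ℝ)

/-- The tail function of `q v / v`. -/
noncomputable def QQ (q : ℝ → ℝ) (u : ℝ) : ℝ := ∫ v in Ioi u, q v / v

variable {q}

lemma fq_nonneg (hq0 : ∀ x, 0 ≤ q x) (hqz : ∀ x ≤ 0, q x = 0) (u : ℝ) :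
    0 ≤ q u / u := by
  rcases le_or_gt u 0 with h | h
  · simp [hqz u h]
  · exact div_nonneg (hq0 u) h.le

lemma fq_int (hqz : ∀ x ≤ 0, q x = 0)
    (hqquot : IntegrableOn (fun u => q u / u) (Ioi 0)) (u : ℝ) :
    IntegrableOn (fun v => q v / v) (Ioi u) := by
  rcases le_or_gt 0 u with h | h
  · exact hqquot.mono_set (Ioi_subset_Ioi h)
  · rw [← Ioc_union_Ioi_eq_Ioi h.le]
    refine IntegrableOn.union ?_ hqquot
    have : EqOn (fun v : ℝ => q v / v) (fun _ => (0:ℝ)) (Ioc u 0) := by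
      intro v hv
      simp [hqz v hv.2]
    exact (integrableOn_congr_fun this measurableSet_Ioc).mpr ((integrableOn_const_iff).mpr
      (Or.inr measure_Ioc_lt_top))

lemma QQ_nonneg (hq0 : ∀ x, 0 ≤ q x) (hqz : ∀ x ≤ 0, q x = 0) (u : ℝ) :
    0 ≤ QQ q u :=
  setIntegral_nonneg measurableSet_Ioi fun v _ => fq_nonneg hq0 hqz v

lemma QQ_anti (hq0 : ∀ x, 0 ≤ q x) (hqz : ∀ x ≤ 0, q x = 0)
    (hqquot : IntegrableOn (fun u => q u / u) (Ioi 0)) : Antitone (QQ q) := by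
  intro a b hab
  exact setIntegral_mono_set (fq_int hqz hqquot a)
    (Filter.Eventually.of_forall fun v => fq_nonneg hq0 hqz v)
    (HasSubset.Subset.eventuallyLE (Ioi_subset_Ioi hab))

variable (q)

/-- The integrand of the convolution term, as a function on the plane. -/
noncomputable def FF : ℝ × ℝ → ENNReal := fun z =>
  ({w : ℝ × ℝ | w.2 ∈ Ioc 0 w.1}).indicator
    (fun w => ENNReal.ofReal (q (w.1 - w.2)) * ENNReal.ofReal (QQ q w.2)) z

/-- The convolution term, as an `ENNReal`-valued function. -/
noncomputable def GG (x : ℝ) : ENNReal := ∫⁻ u, FF q (x, u)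

variable {q}

lemma FF_meas (hmq : Measurable q) (hmQ : Measurable (QQ q)) : Measurable (FF q) := by
  refine Measurable.indicator ?_ ?_
  · exact ((ENNReal.measurable_ofReal.comp (hmq.comp (measurable_fst.sub measurable_snd))).mul
      (ENNReal.measurable_ofReal.comp (hmQ.comp measurable_snd)))
  · have : {w : ℝ × ℝ | w.2 ∈ Ioc 0 w.1}
        = {w : ℝ × ℝ | 0 < w.2} ∩ {w : ℝ × ℝ | w.2 ≤ w.1} := by
      ext w; simp [Set.mem_Ioc, and_comm]
    rw [this]
    exact (measurableSet_lt measurable_const measurable_snd).inter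
      (measurableSet_le measurable_snd measurable_fst)

theorem core (hmq : Measurable q) (hq0 : ∀ x, 0 ≤ q x)
    (hqz : ∀ x ≤ 0, q x = 0) (hqint : IntegrableOn q (Ioi 0))
    (hqone : ∫ x in Ioi 0, q x = 1)
    (hqquot : IntegrableOn (fun u => q u / u) (Ioi 0)) :
    ∫ x in Ioi 0, T q x = 1 := by
  have hmf : Measurable fun u : ℝ => q u / u := hmq.div measurable_id
  have hmQ : Measurable (QQ q) := (QQ_anti hq0 hqz hqquot).measurable
  have hmF : Measurable fun v : ℝ => ENNReal.ofReal (q v / v) :=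
    ENNReal.measurable_ofReal.comp hmf
  have hQof : ∀ u : ℝ, ENNReal.ofReal (QQ q u) = ∫⁻ v in Ioi u, ENNReal.ofReal (q v / v) :=
    fun u => ofReal_integral_eq_lintegral_ofReal (fq_int hqz hqquot u)
      (Filter.Eventually.of_forall fun v => fq_nonneg hq0 hqz v)
  have hone' : ∫⁻ v in Ioi (0:ℝ), ENNReal.ofReal (q v) = 1 := by
    rw [← ofReal_integral_eq_lintegral_ofReal hqint
      (Filter.Eventually.of_forall fun v => hq0 v), hqone, ENNReal.ofReal_one]
  -- Step A : the tail function integrates to 1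
  have stepA : ∫⁻ x in Ioi (0:ℝ), ENNReal.ofReal (QQ q x) = 1 := by
    have h1 : ∫⁻ x in Ioi (0:ℝ), ENNReal.ofReal (QQ q x)
        = ∫⁻ x in Ioi (0:ℝ), ∫⁻ v in Ioi (0:ℝ),
            (Ioi x).indicator (fun v => ENNReal.ofReal (q v / v)) v := by
      refine setLIntegral_congr_fun measurableSet_Ioi
        (fun x hx => ?_)
      rw [hQof x, lintegral_indicator measurableSet_Ioi,
        Measure.restrict_restrict measurableSet_Ioi,
        inter_eq_self_of_subset_left (Ioi_subset_Ioi hx.le)]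
    have h2 : ∫⁻ x in Ioi (0:ℝ), ∫⁻ v in Ioi (0:ℝ),
            (Ioi x).indicator (fun v => ENNReal.ofReal (q v / v)) v
        = ∫⁻ v in Ioi (0:ℝ), ∫⁻ x in Ioi (0:ℝ),
            (Ioi x).indicator (fun v => ENNReal.ofReal (q v / v)) v := by
      refine lintegral_lintegral_swap (Measurable.aemeasurable ?_)
      have heq : (Function.uncurry fun x v =>
            (Ioi x).indicator (fun v => ENNReal.ofReal (q v / v)) v)
          = fun z : ℝ × ℝ => ({w : ℝ × ℝ | w.1 < w.2}).indicator
              (fun w => ENNReal.ofReal (q w.2 / w.2)) z := by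
        ext z
        simp only [Function.uncurry, Set.indicator_apply, mem_Ioi, mem_setOf_eq]
      rw [heq]
      exact (hmF.comp measurable_snd).indicator (measurableSet_lt measurable_fst measurable_snd)
    have h3 : ∫⁻ v in Ioi (0:ℝ), ∫⁻ x in Ioi (0:ℝ),
            (Ioi x).indicator (fun v => ENNReal.ofReal (q v / v)) v
        = ∫⁻ v in Ioi (0:ℝ), ENNReal.ofReal (q v) := by
      refine setLIntegral_congr_fun measurableSet_Ioi
        (fun v hv => ?_)
      calc ∫⁻ x in Ioi (0:ℝ), (Ioi x).indicator (fun v => ENNReal.ofReal (q v / v)) v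
          = ∫⁻ x in Ioi (0:ℝ),
              (Iio v).indicator (fun _ => ENNReal.ofReal (q v / v)) x := by
            refine lintegral_congr fun x => ?_
            simp only [Set.indicator_apply, mem_Ioi, mem_Iio]
        _ = ∫⁻ _ in Iio v ∩ Ioi 0, ENNReal.ofReal (q v / v) := by
            rw [lintegral_indicator measurableSet_Iio,
              Measure.restrict_restrict measurableSet_Iio]
        _ = ENNReal.ofReal (q v / v) * ENNReal.ofReal v := by
            rw [setLIntegral_const]
            congr 1
            rw [inter_comm, Ioi_inter_Iio, Real.volume_Ioo, sub_zero]
        _ = ENNReal.ofReal (q v) := by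
            rw [← ENNReal.ofReal_mul (fq_nonneg hq0 hqz v), div_mul_cancel₀ _ (ne_of_gt hv)]
    rw [h1, h2, h3, hone']
  have hQone : ∫ x in Ioi (0:ℝ), QQ q x = 1 := by
    rw [integral_eq_lintegral_of_nonneg_ae
      (Filter.Eventually.of_forall fun x => QQ_nonneg hq0 hqz x) hmQ.aestronglyMeasurable,
      stepA, ENNReal.toReal_one]
  have hQint : IntegrableOn (QQ q) (Ioi 0) :=
    ⟨hmQ.aestronglyMeasurable, (hasFiniteIntegral_iff_ofReal
      (Filter.Eventually.of_forall fun x => QQ_nonneg hq0 hqz x)).mpr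
      (by rw [stepA]; exact ENNReal.one_lt_top)⟩
  -- Step B : the convolution term
  have hmF2 : Measurable (FF q) := FF_meas hmq hmQ
  have hmG : Measurable (GG q) := hmF2.lintegral_prod_right'
  have hGx : ∀ x : ℝ, GG q x
      = ∫⁻ u in Ioc 0 x, ENNReal.ofReal (q (x - u)) * ENNReal.ofReal (QQ q u) := by
    intro x
    rw [GG, ← lintegral_indicator measurableSet_Ioc]
    refine lintegral_congr fun u => ?_
    simp only [FF, Set.indicator_apply, mem_setOf_eq]
  have hGI : ∀ x : ℝ, (∫ u in Ioc 0 x, q (x - u) * QQ q u) = (GG q x).toReal := by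
    intro x
    have hmeas : AEStronglyMeasurable (fun u : ℝ => q (x - u) * QQ q u)
        (volume.restrict (Ioc 0 x)) := by
      apply Measurable.aestronglyMeasurable
      exact (hmq.comp (measurable_id.const_sub x)).mul hmQ
    rw [integral_eq_lintegral_of_nonneg_ae
      (Filter.Eventually.of_forall fun u => mul_nonneg (hq0 _) (QQ_nonneg hq0 hqz u))
      hmeas]
    congr 1
    rw [hGx x]
    exact lintegral_congr fun u => by rw [ENNReal.ofReal_mul (hq0 _)]
  have stepB : ∫⁻ x in Ioi (0:ℝ), GG q x = 1 := by
    have hGset : ∀ x : ℝ, GG q x = ∫⁻ u in Ioi (0:ℝ), FF q (x, u) := by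
      intro x
      rw [GG, ← lintegral_indicator measurableSet_Ioi]
      refine lintegral_congr fun u => ?_
      by_cases hu : 0 < u
      · simp [Set.indicator_apply, hu]
      · simp [FF, Set.indicator_apply, mem_setOf_eq, mem_Ioc, hu]
    have hswap : ∫⁻ x in Ioi (0:ℝ), ∫⁻ u in Ioi (0:ℝ), FF q (x, u)
        = ∫⁻ u in Ioi (0:ℝ), ∫⁻ x in Ioi (0:ℝ), FF q (x, u) :=
      lintegral_lintegral_swap hmF2.aemeasurable
    have hinner : ∀ u ∈ Ioi (0:ℝ),
        ∫⁻ x in Ioi (0:ℝ), FF q (x, u) = ENNReal.ofReal (QQ q u) := by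
      intro u hu
      have hu' : (0:ℝ) < u := hu
      calc ∫⁻ x in Ioi (0:ℝ), FF q (x, u)
          = ∫⁻ x in Ioi (0:ℝ), (Ici u).indicator
              (fun x => ENNReal.ofReal (q (x - u)) * ENNReal.ofReal (QQ q u)) x := by
            refine lintegral_congr fun x => ?_
            simp only [FF, Set.indicator_apply, mem_setOf_eq, mem_Ioc, mem_Ici]
            by_cases hux : u ≤ x
            · simp [hux, hu']
            · simp [hux]
        _ = ∫⁻ x in Ici u ∩ Ioi 0, ENNReal.ofReal (q (x - u)) * ENNReal.ofReal (QQ q u) := by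
            rw [lintegral_indicator measurableSet_Ici,
              Measure.restrict_restrict measurableSet_Ici]
        _ = ∫⁻ x in Ici u, ENNReal.ofReal (q (x - u)) * ENNReal.ofReal (QQ q u) := by
            have hsub : Ici u ⊆ Ioi 0 := fun x hx => lt_of_lt_of_le hu' hx
            rw [inter_eq_self_of_subset_left hsub]
        _ = (∫⁻ x in Ici u, ENNReal.ofReal (q (x - u))) * ENNReal.ofReal (QQ q u) :=
            lintegral_mul_const' _ _ ENNReal.ofReal_ne_top
        _ = (∫⁻ y in Ici (0:ℝ), ENNReal.ofReal (q y)) * ENNReal.ofReal (QQ q u) := by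
            congr 1
            have htrans := (measurePreserving_add_right volume u).setLIntegral_comp_preimage_emb
              (measurableEmbedding_addRight u) (fun x => ENNReal.ofReal (q (x - u))) (Ici u)
            have hset : (fun y : ℝ => y + u) ⁻¹' (Ici u) = Ici (0:ℝ) := by
              ext y; simp [le_add_iff_nonneg_left]
            rw [hset] at htrans
            rw [← htrans]
            exact lintegral_congr fun y => by rw [add_sub_cancel_right]
        _ = (∫⁻ y in Ioi (0:ℝ), ENNReal.ofReal (q y)) * ENNReal.ofReal (QQ q u) := by
            rw [Measure.restrict_congr_set Ioi_ae_eq_Ici]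
        _ = ENNReal.ofReal (QQ q u) := by rw [hone', one_mul]
    calc ∫⁻ x in Ioi (0:ℝ), GG q x
        = ∫⁻ x in Ioi (0:ℝ), ∫⁻ u in Ioi (0:ℝ), FF q (x, u) :=
          lintegral_congr fun x => hGset x
      _ = ∫⁻ u in Ioi (0:ℝ), ∫⁻ x in Ioi (0:ℝ), FF q (x, u) := hswap
      _ = ∫⁻ u in Ioi (0:ℝ), ENNReal.ofReal (QQ q u) :=
          setLIntegral_congr_fun measurableSet_Ioi hinner
      _ = 1 := stepA
  have hGfin : ∀ᵐ x ∂(volume.restrict (Ioi (0:ℝ))), GG q x ≠ ⊤ := by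
    filter_upwards [ae_lt_top hmG (by rw [stepB]; exact ENNReal.one_ne_top)] with x hx
    exact hx.ne
  have hImeas : AEStronglyMeasurable (fun x => (GG q x).toReal)
      (volume.restrict (Ioi (0:ℝ))) := hmG.ennreal_toReal.aestronglyMeasurable
  have hofG : ∫⁻ x in Ioi (0:ℝ), ENNReal.ofReal (GG q x).toReal = 1 := by
    rw [lintegral_congr_ae (hGfin.mono fun x hx => ENNReal.ofReal_toReal hx), stepB]
  have hIint : IntegrableOn (fun x => (GG q x).toReal) (Ioi 0) := by
    refine ⟨hImeas, (hasFiniteIntegral_iff_ofReal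
      (Filter.Eventually.of_forall fun x => ENNReal.toReal_nonneg)).mpr ?_⟩
    rw [hofG]; exact ENNReal.one_lt_top
  have hIone : ∫ x in Ioi (0:ℝ), (GG q x).toReal = 1 := by
    rw [integral_eq_lintegral_of_nonneg_ae
      (Filter.Eventually.of_forall fun x => ENNReal.toReal_nonneg) hImeas, hofG,
      ENNReal.toReal_one]
  -- assemble
  have hTeq : ∀ x ∈ Ioi (0:ℝ), T q x = (1/2) * (GG q x).toReal + (1/2) * QQ q x := by
    intro x hx
    have h1 : (∫ u in (0:ℝ)..x, q (x - u) * ∫ v in Ioi u, q v / v)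
        = ∫ u in Ioc 0 x, q (x - u) * QQ q u :=
      intervalIntegral.integral_of_le (le_of_lt hx)
    rw [T, h1, hGI x, QQ]
  calc ∫ x in Ioi (0:ℝ), T q x
      = ∫ x in Ioi (0:ℝ), ((1/2) * (GG q x).toReal + (1/2) * QQ q x) :=
        setIntegral_congr_fun measurableSet_Ioi hTeq
    _ = (1/2) * (∫ x in Ioi (0:ℝ), (GG q x).toReal) + (1/2) * ∫ x in Ioi (0:ℝ), QQ q x := by
        rw [integral_add (hIint.const_mul _) (hQint.const_mul _),
          integral_const_mul, integral_const_mul]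
    _ = 1 := by rw [hIone, hQone]; norm_num

end Core

theorem T_preserves_density (p : ℝ → ℝ)
    (hint : IntegrableOn p (Ioi 0))
    (hpos : ∀ᵐ x ∂(volume.restrict (Ioi (0:ℝ))), 0 ≤ p x)
    (hone : ∫ x in Ioi (0:ℝ), p x = 1)
    (hquot : IntegrableOn (fun u => p u / u) (Ioi 0)) :
    (∀ x ∈ Ioi (0:ℝ), 0 ≤ T p x) ∧ ∫ x in Ioi (0:ℝ), T p x = 1 := by
  have hsm := hint.aestronglyMeasurable
  set q : ℝ → ℝ := fun x => if 0 < x then max (hsm.mk p x) 0 else 0 with hqdef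
  have hmq : Measurable q :=
    Measurable.ite measurableSet_Ioi
      (hsm.stronglyMeasurable_mk.measurable.max measurable_const) measurable_const
  have hq0 : ∀ x, 0 ≤ q x := by
    intro x
    simp only [hqdef]
    split
    · exact le_max_right _ _
    · exact le_refl 0
  have hqz : ∀ x ≤ 0, q x = 0 := by
    intro x hx
    simp only [hqdef]
    exact if_neg (not_lt.mpr hx)
  have hpq : p =ᵐ[volume.restrict (Ioi (0:ℝ))] q := by
    filter_upwards [hpos, hsm.ae_eq_mk, ae_restrict_mem measurableSet_Ioi] with x h0 hmk hx
    simp only [hqdef]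
    rw [if_pos (mem_Ioi.mp hx), ← hmk, max_eq_left h0]
  have hqint : IntegrableOn q (Ioi 0) := hint.congr hpq
  have hqone : ∫ x in Ioi (0:ℝ), q x = 1 := by rw [← integral_congr_ae hpq]; exact hone
  have hpfq : (fun u => p u / u) =ᵐ[volume.restrict (Ioi (0:ℝ))] fun u => q u / u :=
    hpq.mono fun x hx => by dsimp only; rw [hx]
  have hqquot : IntegrableOn (fun u => q u / u) (Ioi 0) := hquot.congr hpfq
  have hp' : ∀ᵐ y ∂(volume : Measure ℝ), y ∈ Ioi (0:ℝ) → p y = q y :=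
    (ae_restrict_iff' measurableSet_Ioi).mp hpq
  have hTeq : ∀ x ∈ Ioi (0:ℝ), T p x = T q x := by
    intro x hx
    have hx' : (0:ℝ) < x := hx
    have h2 : (∫ u in Ioi x, p u / u) = ∫ u in Ioi x, q u / u :=
      integral_congr_ae (ae_restrict_of_ae_restrict_of_subset (Ioi_subset_Ioi hx'.le) hpfq)
    have hQeq : ∀ u : ℝ, 0 < u → (∫ v in Ioi u, p v / v) = ∫ v in Ioi u, q v / v := fun u hu =>
      integral_congr_ae (ae_restrict_of_ae_restrict_of_subset (Ioi_subset_Ioi hu.le) hpfq)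
    have h1 : (∫ u in (0:ℝ)..x, p (x - u) * ∫ v in Ioi u, p v / v)
        = ∫ u in (0:ℝ)..x, q (x - u) * ∫ v in Ioi u, q v / v := by
      refine intervalIntegral.integral_congr_ae ?_
      have hsub := (Measure.measurePreserving_sub_left volume x).quasiMeasurePreserving.ae hp'
      have hne : ∀ᵐ u : ℝ ∂volume, u ≠ x := by
        refine ae_iff.mpr ?_
        have hset : {u : ℝ | ¬u ≠ x} = {x} := by ext u; simp
        rw [hset]
        exact measure_singleton x
      filter_upwards [hsub, hne] with u hpu hux hmem
      rw [uIoc_of_le hx'.le] at hmem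
      have h0u : 0 < u := hmem.1
      have hlt : u < x := lt_of_le_of_ne hmem.2 hux
      rw [hpu (mem_Ioi.mpr (sub_pos.mpr hlt)), hQeq u h0u]
    rw [T, T, h1, h2]
  have hTq0 : ∀ x ∈ Ioi (0:ℝ), 0 ≤ T q x := by
    intro x hx
    have hx' : (0:ℝ) < x := hx
    rw [T]
    refine add_nonneg (mul_nonneg (by norm_num) ?_) (mul_nonneg (by norm_num)
      (setIntegral_nonneg measurableSet_Ioi fun v _ => fq_nonneg hq0 hqz v))
    exact intervalIntegral.integral_nonneg hx'.le fun u _ => mul_nonneg (hq0 _)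
      (setIntegral_nonneg measurableSet_Ioi fun v _ => fq_nonneg hq0 hqz v)
  refine ⟨fun x hx => by rw [hTeq x hx]; exact hTq0 x hx, ?_⟩
  rw [setIntegral_congr_fun measurableSet_Ioi hTeq]
  exact core hmq hq0 hqz hqint hqone hqquot
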